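/- For every α ∈ (0,1/2) there is a unique λ_α ∈ (0,1) with λ_α·F_α'(λ_α) = F_α(λ_α), and as α ↑ 1/2 the following limits hold: (1 − λ_α)/(1/2 − α)² → 16/9 (i.e. λ_α = 1 − (16/9)(1/2 − α)² + o((1/2 − α)²)); F_α(λ_α) → 1; and (1/2 − α)·F_α''(λ_α) → 3√3/16, where F_α''(z) = 3/(4(2α − 1 + √3)·√(1−z)). -/

import Mathlib

open Real Filter Set

/-- The generating function `F_α(z) = (2α - 1 + √3 z + (1-z)^{3/2})/(2α - 1 + √3)`. -/
noncomputable def Falpha (α : ℝ) (z : ℝ) : ℝ :=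
  (2 * α - 1 + Real.sqrt 3 * z + (1 - z) ^ ((3 : ℝ) / 2))
    / (2 * α - 1 + Real.sqrt 3)

noncomputable def sfun (α : ℝ) : ℝ := 2 * Real.sin (Real.arcsin (1 - 2 * α) / 3)

noncomputable def lam0 (α : ℝ) : ℝ := 1 - (sfun α) ^ 2

lemma one_lt_sqrt3 : (1 : ℝ) < Real.sqrt 3 := by
  have := Real.sqrt_lt_sqrt (by norm_num : (0:ℝ) ≤ 1) (by norm_num : (1:ℝ) < 3)
  simpa using this

lemma c_ne (α : ℝ) (hα : 0 < α) : (2 * α - 1 + Real.sqrt 3) ≠ 0 := by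
  have := one_lt_sqrt3
  nlinarith

lemma hasDerivAt_Falpha (α z : ℝ) :
    HasDerivAt (Falpha α)
      ((Real.sqrt 3 - 3 / 2 * (1 - z) ^ ((1 : ℝ) / 2)) / (2 * α - 1 + Real.sqrt 3)) z := by
  have h1 : HasDerivAt (fun x : ℝ => 1 - x) (-1) z := by
    simpa using (hasDerivAt_id z).const_sub 1
  have h2 : HasDerivAt (fun x : ℝ => (1 - x) ^ ((3 : ℝ) / 2))
      ((3 : ℝ) / 2 * (1 - z) ^ ((1 : ℝ) / 2) * (-1)) z := by
    have := (Real.hasDerivAt_rpow_const (x := 1 - z) (p := (3:ℝ)/2)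
      (Or.inr (by norm_num))).comp z h1
    exact this.congr_deriv (by norm_num)
  have h3 : HasDerivAt (fun x : ℝ => 2 * α - 1 + Real.sqrt 3 * x + (1 - x) ^ ((3 : ℝ) / 2))
      (Real.sqrt 3 * 1 + (3 : ℝ) / 2 * (1 - z) ^ ((1 : ℝ) / 2) * (-1)) z :=
    (((hasDerivAt_id z).const_mul (Real.sqrt 3)).const_add (2 * α - 1)).add h2
  have h4 := h3.div_const (2 * α - 1 + Real.sqrt 3)
  exact h4.congr_deriv (by ring)

lemma deriv_Falpha (α : ℝ) : deriv (Falpha α)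
    = fun z => (Real.sqrt 3 - 3 / 2 * (1 - z) ^ ((1 : ℝ) / 2)) / (2 * α - 1 + Real.sqrt 3) :=
  funext fun z => (hasDerivAt_Falpha α z).deriv

lemma deriv2_Falpha (α l : ℝ) (hl : l < 1) :
    deriv (deriv (Falpha α)) l
      = (3 / 4 * (1 - l) ^ (-(1 : ℝ) / 2)) / (2 * α - 1 + Real.sqrt 3) := by
  rw [deriv_Falpha]
  have h1 : HasDerivAt (fun x : ℝ => 1 - x) (-1) l := by
    simpa using (hasDerivAt_id l).const_sub 1
  have hne : (1 - l) ≠ 0 := by linarith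
  have h2 : HasDerivAt (fun x : ℝ => (1 - x) ^ ((1 : ℝ) / 2))
      ((1 : ℝ) / 2 * (1 - l) ^ (-(1 : ℝ) / 2) * (-1)) l := by
    have := (Real.hasDerivAt_rpow_const (x := 1 - l) (p := (1:ℝ)/2) (Or.inl hne)).comp l h1
    exact this.congr_deriv (by norm_num)
  have h3 : HasDerivAt
      (fun x : ℝ => (Real.sqrt 3 - 3 / 2 * (1 - x) ^ ((1 : ℝ) / 2)) / (2 * α - 1 + Real.sqrt 3))
      ((0 - 3 / 2 * ((1 : ℝ) / 2 * (1 - l) ^ (-(1 : ℝ) / 2) * (-1))) / (2 * α - 1 + Real.sqrt 3))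
      l := ((hasDerivAt_const l (Real.sqrt 3)).sub (h2.const_mul (3 / 2))).div_const _
  rw [h3.deriv]
  ring

lemma eq_iff_sqrt (α l : ℝ) (hα : α ∈ Set.Ioo (0:ℝ) (1/2)) (hl : l ∈ Set.Ioo (0:ℝ) 1) :
    l * deriv (Falpha α) l = Falpha α l
      ↔ Real.sqrt (1 - l) * (2 + l) = 2 * (1 - 2 * α) := by
  obtain ⟨hα0, hα1⟩ := hα
  obtain ⟨hl0, hl1⟩ := hl
  have hc : (2 * α - 1 + Real.sqrt 3) ≠ 0 := c_ne α hα0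
  have hx : (0:ℝ) < 1 - l := by linarith
  have hrw : (1 - l) ^ ((3:ℝ)/2) = (1 - l) * Real.sqrt (1 - l) := by
    rw [show (3:ℝ)/2 = 1 + 1/2 by norm_num, Real.rpow_add hx, Real.rpow_one,
      ← Real.sqrt_eq_rpow]
  simp only [deriv_Falpha]
  unfold Falpha
  rw [hrw, ← Real.sqrt_eq_rpow]
  rw [← mul_div_assoc, div_eq_div_iff hc hc]
  constructor
  · intro h
    have h' := mul_right_cancel₀ hc h
    linear_combination (-2 : ℝ) * h'
  · intro h
    linear_combination (-(2 * α - 1 + Real.sqrt 3) / 2) * h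

lemma sfun_spec (α : ℝ) (hα : α ∈ Set.Ioo (0:ℝ) (1/2)) :
    sfun α ∈ Set.Ioo (0:ℝ) 1 ∧ sfun α * (3 - (sfun α) ^ 2) = 2 * (1 - 2 * α) := by
  obtain ⟨h0, h1⟩ := hα
  have hε0 : (0:ℝ) < 1 - 2 * α := by linarith
  have hε1 : 1 - 2 * α < 1 := by linarith
  have hθ0 : 0 < Real.arcsin (1 - 2 * α) := Real.arcsin_pos.2 hε0
  have hθ1 : Real.arcsin (1 - 2 * α) < π / 2 := Real.arcsin_lt_pi_div_two.2 hε1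
  have hpi := Real.pi_pos
  set φ := Real.arcsin (1 - 2 * α) / 3 with hφ
  have hφ0 : 0 < φ := by positivity
  have hφ1 : φ < π / 6 := by rw [hφ]; linarith
  have hsin0 : 0 < Real.sin φ := Real.sin_pos_of_pos_of_lt_pi hφ0 (by linarith)
  have hsin1 : Real.sin φ < 1 / 2 := by
    have := Real.sin_lt_sin_of_lt_of_le_pi_div_two (x := φ) (y := π / 6)
      (by linarith) (by linarith) hφ1
    rwa [Real.sin_pi_div_six] at this
  have hkey : 3 * Real.sin φ - 4 * Real.sin φ ^ 3 = 1 - 2 * α := by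
    rw [← Real.sin_three_mul, show 3 * φ = Real.arcsin (1 - 2 * α) by rw [hφ]; ring,
      Real.sin_arcsin (by linarith) (by linarith)]
  refine ⟨⟨by simp only [sfun, ← hφ]; linarith, by simp only [sfun, ← hφ]; linarith⟩, ?_⟩
  simp only [sfun, ← hφ]
  linear_combination (2:ℝ) * hkey

lemma lam0_spec (α : ℝ) (hα : α ∈ Set.Ioo (0:ℝ) (1/2)) :
    lam0 α ∈ Set.Ioo (0:ℝ) 1 ∧
      Real.sqrt (1 - lam0 α) * (2 + lam0 α) = 2 * (1 - 2 * α) := by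
  obtain ⟨⟨hs0, hs1⟩, heq⟩ := sfun_spec α hα
  have hmem : lam0 α ∈ Set.Ioo (0:ℝ) 1 := by
    constructor
    · simp only [lam0]; nlinarith
    · simp only [lam0]; nlinarith
  refine ⟨hmem, ?_⟩
  have h1 : (1 : ℝ) - lam0 α = (sfun α) ^ 2 := by simp [lam0]
  rw [h1, Real.sqrt_sq hs0.le]
  have : (2 : ℝ) + lam0 α = 3 - (sfun α) ^ 2 := by simp [lam0]; ring
  rw [this]
  exact heq

lemma uniq_sol (α l1 l2 : ℝ) (h1 : l1 ∈ Set.Ioo (0:ℝ) 1) (h2 : l2 ∈ Set.Ioo (0:ℝ) 1)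
    (e1 : Real.sqrt (1 - l1) * (2 + l1) = 2 * (1 - 2 * α))
    (e2 : Real.sqrt (1 - l2) * (2 + l2) = 2 * (1 - 2 * α)) : l1 = l2 := by
  set u1 := Real.sqrt (1 - l1) with hu1def
  set u2 := Real.sqrt (1 - l2) with hu2def
  have hu1 : u1 ^ 2 = 1 - l1 := Real.sq_sqrt (by linarith [h1.2])
  have hu2 : u2 ^ 2 = 1 - l2 := Real.sq_sqrt (by linarith [h2.2])
  have hu1pos : 0 < u1 := Real.sqrt_pos.2 (by linarith [h1.2])
  have hu2pos : 0 < u2 := Real.sqrt_pos.2 (by linarith [h2.2])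
  have hu1lt : u1 < 1 := by nlinarith [h1.1]
  have hu2lt : u2 < 1 := by nlinarith [h2.1]
  have he : u1 * (3 - u1 ^ 2) = u2 * (3 - u2 ^ 2) := by
    linear_combination e1 - e2 - u1 * hu1 + u2 * hu2
  have hfac : (u1 - u2) * (3 - (u1 ^ 2 + u1 * u2 + u2 ^ 2)) = 0 := by
    linear_combination he
  have hpos : 0 < 3 - (u1 ^ 2 + u1 * u2 + u2 ^ 2) := by nlinarith
  have huu : u1 = u2 := by
    rcases mul_eq_zero.1 hfac with h | h
    · linarith
    · linarith
  nlinarith [hu1, hu2, huu]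

lemma sfun_half : sfun (1/2 : ℝ) = 0 := by
  norm_num [sfun, Real.arcsin_zero]

lemma hasDerivAt_sfun : HasDerivAt sfun (-(4:ℝ)/3) (1/2) := by
  have h1 : HasDerivAt (fun α : ℝ => 1 - 2 * α) (-2) (1/2) := by
    simpa using ((hasDerivAt_id (1/2:ℝ)).const_mul (2:ℝ)).const_sub 1
  have h2 : HasDerivAt Real.arcsin (1 / Real.sqrt (1 - (1 - 2 * (1/2:ℝ)) ^ 2))
      (1 - 2 * (1/2:ℝ)) :=
    Real.hasDerivAt_arcsin (by norm_num) (by norm_num)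
  have h3 := (h2.comp (1/2 : ℝ) h1).div_const 3
  have h4 := (Real.hasDerivAt_sin ((fun α : ℝ => Real.arcsin (1 - 2 * α) / 3) (1/2:ℝ))).comp
    (1/2:ℝ) h3
  have h5 := h4.const_mul (2:ℝ)
  have : sfun = fun α : ℝ => 2 * Real.sin (Real.arcsin (1 - 2 * α) / 3) := rfl
  rw [this]
  exact h5.congr_deriv (by norm_num [Real.arcsin_zero])

lemma tendsto_ratio :
    Tendsto (fun α => sfun α / (1/2 - α)) (nhdsWithin (1/2 : ℝ) (Set.Iio (1/2)))
      (nhds (4/3)) := by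
  have h := hasDerivAt_iff_tendsto_slope.mp hasDerivAt_sfun
  have hsub : Set.Iio (1/2:ℝ) ⊆ {(1/2:ℝ)}ᶜ := fun x hx => ne_of_lt hx
  have h2 := (h.mono_left (nhdsWithin_mono _ hsub)).neg
  have hfeq : (fun α : ℝ => -slope sfun (1/2) α) = fun α => sfun α / (1/2 - α) := by
    funext α
    rw [slope_def_field, sfun_half, sub_zero,
      show (1/2 - α : ℝ) = -(α - 1/2) by ring, div_neg]
  rw [hfeq] at h2
  convert h2 using 2
  norm_num

lemma rpow_sq_three_halves {s : ℝ} (hs : 0 ≤ s) : (s ^ 2 : ℝ) ^ ((3:ℝ)/2) = s ^ 3 := by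
  rw [← Real.rpow_natCast s 2, ← Real.rpow_mul hs,
    show ((2:ℕ):ℝ) * ((3:ℝ)/2) = ((3:ℕ):ℝ) by push_cast; ring, Real.rpow_natCast]

lemma rpow_sq_neg_half {s : ℝ} (hs : 0 < s) : (s ^ 2 : ℝ) ^ (-(1:ℝ)/2) = s⁻¹ := by
  rw [← Real.rpow_natCast s 2, ← Real.rpow_mul hs.le,
    show ((2:ℕ):ℝ) * (-(1:ℝ)/2) = -1 by push_cast; ring, Real.rpow_neg_one]

/-- For every `α ∈ (0, 1/2)` there is a unique `λ_α ∈ (0,1)` with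
`λ_α F_α'(λ_α) = F_α(λ_α)`, and as `α ↑ 1/2`:
`(1 - λ_α)/(1/2 - α)² → 16/9`, `F_α(λ_α) → 1`, and
`(1/2 - α) F_α''(λ_α) → 3√3/16`. -/
theorem lambda_alpha_near_critical :
    (∀ α ∈ Set.Ioo (0 : ℝ) (1 / 2),
      ∃! l : ℝ, l ∈ Set.Ioo (0 : ℝ) 1 ∧ l * deriv (Falpha α) l = Falpha α l)
    ∧ ∀ lam : ℝ → ℝ,
        (∀ α ∈ Set.Ioo (0 : ℝ) (1 / 2),
          lam α ∈ Set.Ioo (0 : ℝ) 1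
            ∧ lam α * deriv (Falpha α) (lam α) = Falpha α (lam α)) →
        (Filter.Tendsto (fun α => (1 - lam α) / (1 / 2 - α) ^ 2)
            (nhdsWithin (1 / 2) (Set.Iio (1 / 2))) (nhds (16 / 9))
          ∧ Filter.Tendsto (fun α => Falpha α (lam α))
              (nhdsWithin (1 / 2) (Set.Iio (1 / 2))) (nhds 1)
          ∧ Filter.Tendsto (fun α => (1 / 2 - α) * deriv (deriv (Falpha α)) (lam α))
              (nhdsWithin (1 / 2) (Set.Iio (1 / 2)))
              (nhds (3 * Real.sqrt 3 / 16))) := by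
  constructor
  · intro α hα
    obtain ⟨hmem, heq⟩ := lam0_spec α hα
    refine ⟨lam0 α, ⟨hmem, (eq_iff_sqrt α _ hα hmem).2 heq⟩, ?_⟩
    rintro l ⟨hlm, hle⟩
    exact uniq_sol α l (lam0 α) hlm hmem ((eq_iff_sqrt α l hα hlm).1 hle) heq
  · intro lam hlam
    set L := nhdsWithin (1/2 : ℝ) (Set.Iio (1/2)) with hL
    have hcong : ∀ᶠ α in L, α ∈ Set.Ioo (0:ℝ) (1/2) ∧ lam α = lam0 α := by
      have h1 : ∀ᶠ α in L, α ∈ Set.Ioo (0:ℝ) (1/2) := by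
        filter_upwards [self_mem_nhdsWithin,
          nhdsWithin_le_nhds (Ioi_mem_nhds (show (0:ℝ) < 1/2 by norm_num))] with a ha hb
        exact ⟨hb, ha⟩
      filter_upwards [h1] with a ha
      refine ⟨ha, ?_⟩
      obtain ⟨hm, he⟩ := hlam a ha
      obtain ⟨hm0, he0⟩ := lam0_spec a ha
      exact uniq_sol a (lam a) (lam0 a) hm hm0 ((eq_iff_sqrt a _ ha hm).1 he) he0
    have hT1 := tendsto_ratio
    have hs3ne : Real.sqrt 3 ≠ 0 := by positivity
    have hid : Tendsto (fun α : ℝ => α) L (nhds (1/2)) :=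
      (continuous_id.tendsto _).mono_left nhdsWithin_le_nhds
    have hs0 : Tendsto sfun L (nhds 0) := by
      have := hasDerivAt_sfun.continuousAt.tendsto
      rw [sfun_half] at this
      exact this.mono_left nhdsWithin_le_nhds
    have hden : Tendsto (fun α : ℝ => 2 * α - 1 + Real.sqrt 3) L (nhds (Real.sqrt 3)) := by
      have := ((hid.const_mul 2).sub_const 1).add_const (Real.sqrt 3)
      convert this using 2
      norm_num
    refine ⟨?_, ?_, ?_⟩
    · have h := hT1.pow 2
      have h' : Tendsto (fun α => (sfun α / (1/2 - α)) ^ 2) L (nhds (16/9)) := by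
        convert h using 2
        norm_num
      refine h'.congr' ?_
      filter_upwards [hcong] with a ⟨ha, hla⟩
      rw [hla, div_pow, show (1:ℝ) - lam0 a = sfun a ^ 2 by simp [lam0]]
    · have hnum : Tendsto
          (fun α => 2 * α - 1 + Real.sqrt 3 * (1 - sfun α ^ 2) + sfun α ^ 3) L
          (nhds (Real.sqrt 3)) := by
        have := (((hid.const_mul 2).sub_const 1).add
          (((hs0.pow 2).const_sub 1).const_mul (Real.sqrt 3))).add (hs0.pow 3)
        convert this using 2
        norm_num
      have hq := hnum.div hden hs3ne
      rw [div_self hs3ne] at hq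
      refine hq.congr' ?_
      filter_upwards [hcong] with a ⟨ha, hla⟩
      obtain ⟨⟨hsa0, hsa1⟩, _⟩ := sfun_spec a ha
      rw [hla]
      unfold Falpha
      rw [show (1:ℝ) - lam0 a = sfun a ^ 2 by simp [lam0],
        rpow_sq_three_halves hsa0.le, show lam0 a = 1 - sfun a ^ 2 from rfl]
      rfl
    · have hT2 : Tendsto (fun α => (1/2 - α) / sfun α) L (nhds (3/4)) := by
        have h := hT1.inv₀ (by norm_num : (4:ℝ)/3 ≠ 0)
        have heq2 : (fun α => (sfun α / (1/2 - α))⁻¹) = fun α => (1/2 - α) / sfun α := by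
          funext a; rw [inv_div]
        rw [heq2] at h
        convert h using 2
        norm_num
      have hdi : Tendsto (fun α : ℝ => (2 * α - 1 + Real.sqrt 3)⁻¹) L
          (nhds (Real.sqrt 3)⁻¹) := hden.inv₀ hs3ne
      have hprod := (hT2.const_mul (3/4 : ℝ)).mul hdi
      have hval : (3/4 : ℝ) * (3/4) * (Real.sqrt 3)⁻¹ = 3 * Real.sqrt 3 / 16 := by
        have h3 : Real.sqrt 3 * Real.sqrt 3 = 3 := Real.mul_self_sqrt (by norm_num)
        have hpos : (0:ℝ) < Real.sqrt 3 := by positivity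
        field_simp
        nlinarith
      rw [hval] at hprod
      refine hprod.congr' ?_
      filter_upwards [hcong] with a ⟨ha, hla⟩
      obtain ⟨⟨hsa0, hsa1⟩, _⟩ := sfun_spec a ha
      have hlt : lam0 a < 1 := (lam0_spec a ha).1.2
      have hcne := c_ne a ha.1
      have hsane : sfun a ≠ 0 := ne_of_gt hsa0
      rw [hla, deriv2_Falpha a (lam0 a) hlt,
        show (1:ℝ) - lam0 a = sfun a ^ 2 by simp [lam0],
        rpow_sq_neg_half hsa0]
      field_simp
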